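/- arXiv:1212.0687 — 3 statements merged into one kernel-verified Lean document; each statement's English description precedes it below -/
import Mathlib

section
/- The Korányi gauge on the Heisenberg group satisfies the quasi-norm triangle inequality needed for d to be a metric: d(x,z) ≤ d(x,y) + d(y,z) for all x, y, z ∈ ℍⁿ (equivalently, ‖x·y‖ ≤ ‖x‖ + ‖y‖). -/
open scoped BigOperators
noncomputable section

abbrev Heis (n : ℕ) := EuclideanSpace ℝ (Fin (2*n)) × ℝ

def symA (n : ℕ) (x y : EuclideanSpace ℝ (Fin (2*n))) : ℝ :=
  ∑ i : Fin n, (x ⟨i.val + n, by have := i.isLt; omega⟩ * y ⟨i.val, by have := i.isLt; omega⟩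
    - x ⟨i.val, by have := i.isLt; omega⟩ * y ⟨i.val + n, by have := i.isLt; omega⟩)

def hMul (n : ℕ) (x y : Heis n) : Heis n :=
  (x.1 + y.1, x.2 + y.2 + 2 * symA n x.1 y.1)

def hInv (n : ℕ) (x : Heis n) : Heis n := (-x.1, -x.2)

def Knorm (n : ℕ) (x : Heis n) : ℝ := (‖x.1‖^4 + x.2^2) ^ ((1:ℝ)/4)

def Kdist (n : ℕ) (x y : Heis n) : ℝ := Knorm n (hMul n (hInv n y) x)

def isotropic (n : ℕ) (W : Submodule ℝ (EuclideanSpace ℝ (Fin (2*n)))) : Prop :=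
  ∀ x ∈ W, ∀ y ∈ W, symA n x y = 0

def plane (n : ℕ) (p : Heis n) (W : Submodule ℝ (EuclideanSpace ℝ (Fin (2*n)))) : Set (Heis n) :=
  {z | ∃ w ∈ W, z = hMul n p (w, (0:ℝ))}

def projH (n : ℕ) (W : Submodule ℝ (EuclideanSpace ℝ (Fin (2*n)))) (x : Heis n) : Heis n :=
  ((Submodule.orthogonalProjection W x.1 : EuclideanSpace ℝ (Fin (2*n))), 0)

def PV (n : ℕ) (p : Heis n) (W : Submodule ℝ (EuclideanSpace ℝ (Fin (2*n)))) (x : Heis n) : Heis n :=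
  hMul n p (projH n W (hMul n (hInv n p) x))

/-! ### Auxiliary lemmas -/

lemma sum_split (n : ℕ) (f : Fin (2*n) → ℝ) :
    ∑ j, f j = ∑ i : Fin n, f ⟨i.val, by omega⟩ + ∑ i : Fin n, f ⟨i.val + n, by omega⟩ := by
  classical
  set g : ℕ → ℝ := fun i => if h : i < 2*n then f ⟨i, h⟩ else 0 with hg
  have h1 : ∑ j : Fin (2*n), f j = ∑ i ∈ Finset.range (2*n), g i := by
    rw [← Fin.sum_univ_eq_sum_range]
    exact Finset.sum_congr rfl fun j _ => by simp [hg, j.isLt]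
  have h2 : ∑ i ∈ Finset.range (2*n), g i
      = ∑ i ∈ Finset.range n, g i + ∑ i ∈ Finset.Ico n (2*n), g i :=
    (Finset.sum_range_add_sum_Ico g (by omega)).symm
  have h3 : ∑ i ∈ Finset.Ico n (2*n), g i = ∑ i ∈ Finset.range n, g (n + i) := by
    rw [Finset.sum_Ico_eq_sum_range, show 2*n - n = n by omega]
  rw [h1, h2, h3]
  congr 1
  · rw [← Fin.sum_univ_eq_sum_range]
    exact Finset.sum_congr rfl fun i _ => by simp [hg, show (i:ℕ) < 2*n by omega]
  · rw [← Fin.sum_univ_eq_sum_range]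
    refine Finset.sum_congr rfl fun i _ => ?_
    have : n + (i:ℕ) < 2*n := by omega
    simp only [hg, dif_pos this]
    have he : (⟨(i:ℕ) + n, by omega⟩ : Fin (2*n)) = ⟨n + (i:ℕ), this⟩ := by
      apply Fin.ext; simp [Nat.add_comm]
    rw [he]

/-- The complex structure `J` on `ℝ^{2n}`. -/
def Jmap (n : ℕ) (y : EuclideanSpace ℝ (Fin (2*n))) : EuclideanSpace ℝ (Fin (2*n)) :=
  WithLp.toLp 2 (fun j : Fin (2*n) => if h : (j : ℕ) < n then -(y ⟨(j:ℕ) + n, by omega⟩)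
           else y ⟨(j:ℕ) - n, by have := j.isLt; omega⟩)

lemma Jmap_lo (n : ℕ) (y : EuclideanSpace ℝ (Fin (2*n))) (i : Fin n) :
    Jmap n y ⟨i.val, by omega⟩ = -(y ⟨i.val + n, by omega⟩) := by
  simp [Jmap, i.isLt]

lemma Jmap_hi (n : ℕ) (y : EuclideanSpace ℝ (Fin (2*n))) (i : Fin n) :
    Jmap n y ⟨i.val + n, by omega⟩ = y ⟨i.val, by omega⟩ := by
  have h : ¬ ((i:ℕ) + n < n) := by omega
  simp only [Jmap, PiLp.toLp_apply, dif_neg h]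
  apply congrArg
  apply Fin.ext
  simp

lemma inner_Jmap (n : ℕ) (x y : EuclideanSpace ℝ (Fin (2*n))) :
    (inner ℝ x (Jmap n y) : ℝ) = symA n x y := by
  rw [PiLp.inner_apply]
  rw [sum_split n (fun j => inner ℝ (x j) (Jmap n y j))]
  unfold symA
  rw [← Finset.sum_add_distrib]
  refine Finset.sum_congr rfl fun i _ => ?_
  rw [Jmap_lo, Jmap_hi]
  simp [RCLike.inner_apply, conj_trivial]
  ring

lemma inner_self_Jmap (n : ℕ) (y : EuclideanSpace ℝ (Fin (2*n))) :
    (inner ℝ y (Jmap n y) : ℝ) = 0 := by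
  rw [PiLp.inner_apply, sum_split n (fun j => inner ℝ (y j) (Jmap n y j))]
  rw [← Finset.sum_add_distrib]
  refine Finset.sum_eq_zero fun i _ => ?_
  rw [Jmap_lo, Jmap_hi]
  simp [RCLike.inner_apply, conj_trivial]
  ring

lemma inner_Jmap_Jmap (n : ℕ) (y : EuclideanSpace ℝ (Fin (2*n))) :
    (inner ℝ (Jmap n y) (Jmap n y) : ℝ) = inner ℝ y y := by
  rw [PiLp.inner_apply, PiLp.inner_apply,
    sum_split n (fun j => inner ℝ (Jmap n y j) (Jmap n y j)),
    sum_split n (fun j => inner ℝ (y j) (y j))]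
  simp only [Jmap_lo, Jmap_hi, RCLike.inner_apply, conj_trivial]
  rw [add_comm]
  congr 1 <;> exact Finset.sum_congr rfl fun i _ => by ring

/-- Symplectic Cauchy–Schwarz: `⟪x,y⟫² + A(x,y)² ≤ ‖x‖²‖y‖²`. -/
lemma symp_cauchy (n : ℕ) (x y : EuclideanSpace ℝ (Fin (2*n))) :
    (inner ℝ x y : ℝ)^2 + (symA n x y)^2 ≤ ‖x‖^2 * ‖y‖^2 := by
  by_cases hy : y = 0
  · subst hy
    have : symA n x 0 = 0 := by unfold symA; simp
    simp [this]
  · set a : ℝ := inner ℝ x y with ha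
    set b : ℝ := symA n x y with hb
    set c : ℝ := ‖y‖^2 with hc
    have hy' : 0 < ‖y‖ := norm_pos_iff.mpr hy
    have hc0 : 0 < c := by rw [hc]; positivity
    have hby : (inner ℝ x (Jmap n y) : ℝ) = b := inner_Jmap n x y
    have hyy : (inner ℝ y y : ℝ) = c := real_inner_self_eq_norm_sq y
    have hJJ : (inner ℝ (Jmap n y) (Jmap n y) : ℝ) = c := by
      rw [inner_Jmap_Jmap, hyy]
    have hyJ : (inner ℝ y (Jmap n y) : ℝ) = 0 := inner_self_Jmap n y
    have hxx : (inner ℝ x x : ℝ) = ‖x‖^2 := real_inner_self_eq_norm_sq x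
    have h0 : (0:ℝ) ≤ inner ℝ (c • x - a • y - b • Jmap n y) (c • x - a • y - b • Jmap n y) :=
      real_inner_self_nonneg
    have hexp : (inner ℝ (c • x - a • y - b • Jmap n y) (c • x - a • y - b • Jmap n y) : ℝ)
        = c^2 * ‖x‖^2 - c * (a^2 + b^2) := by
      have h1 : (inner ℝ y x : ℝ) = a := by rw [real_inner_comm]; try exact ha.symm
      have h2 : (inner ℝ (Jmap n y) x : ℝ) = b := by rw [real_inner_comm]; try exact hby
      have h3 : (inner ℝ (Jmap n y) y : ℝ) = 0 := by rw [real_inner_comm]; try exact hyJ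
      simp only [inner_sub_left, inner_sub_right, real_inner_smul_left, real_inner_smul_right,
        hxx, hyy, hJJ, hyJ]
      rw [h1, h2, h3, hby]
      ring
    rw [hexp] at h0
    nlinarith [sq_nonneg c]

lemma knorm_eq (n : ℕ) (x : Heis n) :
    Knorm n x = Real.sqrt (Real.sqrt (‖x.1‖^4 + x.2^2)) := by
  unfold Knorm
  have h : (0:ℝ) ≤ ‖x.1‖^4 + x.2^2 := by positivity
  rw [show ((1:ℝ)/4) = (1/2 : ℝ) * (1/2 : ℝ) by norm_num, Real.rpow_mul h,
    ← Real.sqrt_eq_rpow, ← Real.sqrt_eq_rpow]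

lemma knorm_nonneg (n : ℕ) (x : Heis n) : 0 ≤ Knorm n x := by
  rw [knorm_eq]; exact Real.sqrt_nonneg _

lemma norm_le_knorm (n : ℕ) (x : Heis n) : ‖x.1‖ ≤ Knorm n x := by
  rw [knorm_eq]
  have h1 : ‖x.1‖ = Real.sqrt (Real.sqrt (‖x.1‖^4)) := by
    rw [show ‖x.1‖^4 = (‖x.1‖^2)^2 by ring, Real.sqrt_sq (by positivity),
      Real.sqrt_sq (norm_nonneg _)]
  have h2 : ‖x.1‖^4 ≤ ‖x.1‖^4 + x.2^2 := by nlinarith [sq_nonneg x.2]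
  calc ‖x.1‖ = Real.sqrt (Real.sqrt (‖x.1‖^4)) := h1
    _ ≤ Real.sqrt (Real.sqrt (‖x.1‖^4 + x.2^2)) := Real.sqrt_le_sqrt (Real.sqrt_le_sqrt h2)

/-- The core inequality: the Korányi gauge is subadditive. -/
lemma knorm_mul_le (n : ℕ) (x y : Heis n) :
    Knorm n (hMul n x y) ≤ Knorm n x + Knorm n y := by
  set a := Knorm n x with hadef
  set b := Knorm n y with hbdef
  have ha0 : 0 ≤ a := knorm_nonneg n x
  have hb0 : 0 ≤ b := knorm_nonneg n y
  set u : ℝ := inner ℝ x.1 y.1 with hu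
  set v : ℝ := symA n x.1 y.1 with hv
  -- complex numbers
  set z1 : ℂ := ⟨‖x.1‖^2, x.2⟩ with hz1
  set z2 : ℂ := ⟨‖y.1‖^2, y.2⟩ with hz2
  set z3 : ℂ := ⟨2*u, 2*v⟩ with hz3
  have habs : ∀ p q : ℝ, ‖(⟨p, q⟩ : ℂ)‖ = Real.sqrt (p^2 + q^2) := by
    intro p q
    rw [Complex.norm_def, Complex.normSq_apply]
    norm_num [pow_two]
  have hsum : ‖(z1 + z2 + z3)‖
      = Real.sqrt (‖(hMul n x y).1‖^4 + (hMul n x y).2^2) := by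
    have hre : (z1 + z2 + z3).re = ‖x.1 + y.1‖^2 := by
      simp only [Complex.add_re, hz1, hz2, hz3]
      rw [norm_add_sq_real x.1 y.1, ← hu]
      ring
    have him : (z1 + z2 + z3).im = x.2 + y.2 + 2 * v := by
      simp only [Complex.add_im, hz1, hz2, hz3]
    have : z1 + z2 + z3 = ⟨‖x.1 + y.1‖^2, x.2 + y.2 + 2*v⟩ := by
      apply Complex.ext
      · exact hre
      · exact him
    rw [this, habs]
    have h14 : (‖x.1 + y.1‖^2)^2 = ‖x.1 + y.1‖^4 := by ring
    rw [h14]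
    rfl
  have htri : ‖(z1 + z2 + z3)‖ ≤ ‖z1‖ + ‖z2‖ + ‖z3‖ :=
    le_trans (norm_add_le _ _) (by gcongr; exact norm_add_le _ _)
  have hz1a : ‖z1‖ = a^2 := by
    rw [habs, hadef, knorm_eq]
    rw [Real.sq_sqrt (Real.sqrt_nonneg _)]
    congr 1
    ring
  have hz2a : ‖z2‖ = b^2 := by
    rw [habs, hbdef, knorm_eq]
    rw [Real.sq_sqrt (Real.sqrt_nonneg _)]
    congr 1
    ring
  have hz3a : ‖z3‖ ≤ 2 * (a * b) := by
    rw [habs]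
    have h1 : (2*u)^2 + (2*v)^2 ≤ (2 * (‖x.1‖ * ‖y.1‖))^2 := by
      have := symp_cauchy n x.1 y.1
      rw [← hu, ← hv] at this
      nlinarith
    calc Real.sqrt ((2*u)^2 + (2*v)^2) ≤ Real.sqrt ((2 * (‖x.1‖ * ‖y.1‖))^2) :=
          Real.sqrt_le_sqrt h1
      _ = 2 * (‖x.1‖ * ‖y.1‖) := Real.sqrt_sq (by positivity)
      _ ≤ 2 * (a * b) := by
          have := norm_le_knorm n x
          have := norm_le_knorm n y
          have : ‖x.1‖ * ‖y.1‖ ≤ a * b :=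
            mul_le_mul (norm_le_knorm n x) (norm_le_knorm n y) (norm_nonneg _) ha0
          linarith
  have hkey : Real.sqrt (‖(hMul n x y).1‖^4 + (hMul n x y).2^2) ≤ (a + b)^2 := by
    rw [← hsum]
    calc ‖(z1 + z2 + z3)‖ ≤ ‖z1‖ + ‖z2‖ + ‖z3‖ := htri
      _ ≤ a^2 + b^2 + 2*(a*b) := by rw [hz1a, hz2a]; linarith
      _ = (a+b)^2 := by ring
  rw [knorm_eq]
  calc Real.sqrt (Real.sqrt (‖(hMul n x y).1‖^4 + (hMul n x y).2^2))
      ≤ Real.sqrt ((a+b)^2) := Real.sqrt_le_sqrt hkey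
    _ = a + b := Real.sqrt_sq (by linarith)

/-! symA bilinearity -/

lemma symA_add_left (n : ℕ) (x x' y : EuclideanSpace ℝ (Fin (2*n))) :
    symA n (x + x') y = symA n x y + symA n x' y := by
  unfold symA
  rw [← Finset.sum_add_distrib]
  refine Finset.sum_congr rfl fun i _ => ?_
  simp only [PiLp.add_apply]
  ring

lemma symA_add_right (n : ℕ) (x y y' : EuclideanSpace ℝ (Fin (2*n))) :
    symA n x (y + y') = symA n x y + symA n x y' := by
  unfold symA
  rw [← Finset.sum_add_distrib]
  refine Finset.sum_congr rfl fun i _ => ?_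
  simp only [PiLp.add_apply]
  ring

lemma symA_neg_left (n : ℕ) (x y : EuclideanSpace ℝ (Fin (2*n))) :
    symA n (-x) y = -symA n x y := by
  unfold symA
  rw [← Finset.sum_neg_distrib]
  refine Finset.sum_congr rfl fun i _ => ?_
  simp only [PiLp.neg_apply]
  ring

lemma symA_neg_right (n : ℕ) (x y : EuclideanSpace ℝ (Fin (2*n))) :
    symA n x (-y) = -symA n x y := by
  unfold symA
  rw [← Finset.sum_neg_distrib]
  refine Finset.sum_congr rfl fun i _ => ?_
  simp only [PiLp.neg_apply]
  ring

lemma symA_self (n : ℕ) (x : EuclideanSpace ℝ (Fin (2*n))) : symA n x x = 0 := by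
  unfold symA
  exact Finset.sum_eq_zero fun i _ => by ring

lemma symA_comm (n : ℕ) (x y : EuclideanSpace ℝ (Fin (2*n))) :
    symA n x y = -symA n y x := by
  unfold symA
  rw [← Finset.sum_neg_distrib]
  exact Finset.sum_congr rfl fun i _ => by ring

lemma hMul_cancel (n : ℕ) (x y z : Heis n) :
    hMul n (hMul n (hInv n z) y) (hMul n (hInv n y) x) = hMul n (hInv n z) x := by
  unfold hMul hInv
  apply Prod.ext
  · simp only
    abel
  · simp only [symA_add_left, symA_add_right, symA_neg_left, symA_neg_right, symA_self]
    ring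

/-- The Korányi gauge satisfies the (quasi-norm) triangle inequality, equivalently
`d(x,z) ≤ d(x,y) + d(y,z)`. -/
theorem stmt1 (n : ℕ) :
    (∀ x y z : Heis n, Kdist n x z ≤ Kdist n x y + Kdist n y z) ∧
    (∀ x y : Heis n, Knorm n (hMul n x y) ≤ Knorm n x + Knorm n y) := by
  constructor
  · intro x y z
    unfold Kdist
    rw [← hMul_cancel n x y z]
    calc Knorm n (hMul n (hMul n (hInv n z) y) (hMul n (hInv n y) x))
        ≤ Knorm n (hMul n (hInv n z) y) + Knorm n (hMul n (hInv n y) x) := knorm_mul_le n _ _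
      _ = Knorm n (hMul n (hInv n y) x) + Knorm n (hMul n (hInv n z) y) := add_comm _ _
  · exact knorm_mul_le n
end
end

section
/- Stopping-region packing: let Δ be a family of 'dyadic cubes' for a k-regular measure μ satisfying the standard Christ–David properties, and let 𝔉 be a family of pairwise disjoint subfamilies ('stopping time regions') 𝒮 ⊂ Δ, each with a top cube Q(𝒮) and a set min(𝒮) of minimal cubes. If 𝔉₂ = { 𝒮 ∈ 𝔉 : μ(Q(𝒮) \ ⋃_{Q ∈ min(𝒮)} Q) ≥ μ(Q(𝒮))/4 }, then the sets Q(𝒮) \ ⋃_{Q∈min(𝒮)} Q are pairwise disjoint over 𝒮 ∈ 𝔉, and consequently Σ_{𝒮∈𝔉₂, Q(𝒮)⊂R} μ(Q(𝒮)) ≤ 4 μ(R) for every cube R ∈ Δ. -/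
open MeasureTheory

/-- The minimal cubes of a family of cubes. -/
def minCubes {X : Type*} (S : Set (Set X)) : Set (Set X) :=
  {Q ∈ S | ∀ R ∈ S, R ⊆ Q → R = Q}

/-- Stopping-region packing: the sets `Q(𝒮) \ ⋃ min(𝒮)` are pairwise disjoint over the
stopping regions `𝒮`, and consequently the top cubes of regions in
`𝔉₂ = {𝒮 : μ(Q(𝒮) \ ⋃ min(𝒮)) ≥ μ(Q(𝒮))/4}` satisfy a Carleson packing bound with
constant `4`. -/
theorem stmt17 {X : Type*} [MeasurableSpace X] (μ : Measure X)
    {ι : Type*} [Countable ι]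
    (Δ : Set (Set X)) (hmeas : ∀ Q ∈ Δ, MeasurableSet Q)
    (hnest : ∀ Q ∈ Δ, ∀ R ∈ Δ, Q ⊆ R ∨ R ⊆ Q ∨ Q ∩ R = ∅)
    (child : Set X → Set (Set X))
    (hchildΔ : ∀ Q ∈ Δ, child Q ⊆ Δ)
    (hchildsub : ∀ Q ∈ Δ, ∀ Q' ∈ child Q, Q' ⊂ Q)
    (hchildcover : ∀ Q ∈ Δ, ∀ R ∈ Δ, R ⊂ Q → ∃ Q' ∈ child Q, R ⊆ Q')
    (𝒮 : ι → Set (Set X))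
    (hSΔ : ∀ i, 𝒮 i ⊆ Δ)
    (hScount : ∀ i, (𝒮 i).Countable)
    (hdisj : ∀ i j, i ≠ j → 𝒮 i ∩ 𝒮 j = ∅)
    (top : ι → Set X)
    (htopmem : ∀ i, top i ∈ 𝒮 i)
    (htop : ∀ i, ∀ Q ∈ 𝒮 i, Q ⊆ top i)
    (htopdist : ∀ i j, i ≠ j → top i ≠ top j)
    (hcoh : ∀ i, ∀ Q ∈ 𝒮 i, ∀ R ∈ Δ, Q ⊆ R → R ⊆ top i → R ∈ 𝒮 i)
    (hchildin : ∀ i, ∀ Q ∈ 𝒮 i, Q ∉ minCubes (𝒮 i) → child Q ⊆ 𝒮 i)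
    (hfinanc : ∀ i, ∀ S₀ ∈ Δ, {Q ∈ 𝒮 i | S₀ ⊆ Q}.Finite) :
    (Pairwise (Function.onFun Disjoint
        (fun i => top i \ ⋃₀ minCubes (𝒮 i)))) ∧
    ∀ R ∈ Δ,
      (∑' j : {i : ι // μ (top i) / 4 ≤ μ (top i \ ⋃₀ minCubes (𝒮 i)) ∧ top i ⊆ R},
        μ (top j.1)) ≤ 4 * μ R := by

  classical
  have htopΔ : ∀ i, top i ∈ Δ := fun i => hSΔ i (htopmem i)
  have hEmeas : ∀ i, MeasurableSet (top i \ ⋃₀ minCubes (𝒮 i)) := by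
    intro i
    refine (hmeas _ (htopΔ i)).diff ?_
    refine MeasurableSet.sUnion ((hScount i).mono fun Q hQ => hQ.1) ?_
    exact fun Q hQ => hmeas Q (hSΔ i hQ.1)
  have key : ∀ i j, i ≠ j → top i ⊆ top j → ∃ Q ∈ minCubes (𝒮 j), top i ⊆ Q := by
    intro i j hij hsub
    have hAfin : {Q ∈ 𝒮 j | top i ⊆ Q}.Finite := hfinanc j (top i) (htopΔ i)
    have hAne : {Q ∈ 𝒮 j | top i ⊆ Q}.Nonempty := ⟨top j, htopmem j, hsub⟩
    obtain ⟨Q, hQA, hQmin⟩ : ∃ Q ∈ {Q ∈ 𝒮 j | top i ⊆ Q}, ∀ a ∈ {Q ∈ 𝒮 j | top i ⊆ Q}, a ⊆ Q → Q = a := by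
      obtain ⟨Q, hQ⟩ := hAfin.exists_minimal hAne
      exact ⟨Q, hQ.prop, fun a ha h => le_antisymm (hQ.le_of_le ha h) h⟩
    have hQS : Q ∈ 𝒮 j := hQA.1
    have htiQ : top i ⊆ Q := hQA.2
    refine ⟨Q, ⟨hQS, ?_⟩, htiQ⟩
    by_contra hnm
    have hnotmin : Q ∉ minCubes (𝒮 j) := fun h => hnm h.2
    have hchQ : child Q ⊆ 𝒮 j := hchildin j Q hQS hnotmin
    have hne : top i ≠ Q := by
      intro h
      have : top i ∈ 𝒮 i ∩ 𝒮 j := ⟨htopmem i, h ▸ hQS⟩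
      rw [hdisj i j hij] at this; exact this
    obtain ⟨Q', hQ'c, hQ'⟩ := hchildcover Q (hSΔ j hQS) (top i) (htopΔ i)
      (HasSubset.Subset.ssubset_of_ne htiQ hne)
    have hQ'S : Q' ∈ 𝒮 j := hchQ hQ'c
    have hQ'lt : Q' ⊂ Q := hchildsub Q (hSΔ j hQS) Q' hQ'c
    have := hQmin Q' ⟨hQ'S, hQ'⟩ hQ'lt.le
    exact hQ'lt.ne (this.symm)
  have hpair : Pairwise (Function.onFun Disjoint
      (fun i => top i \ ⋃₀ minCubes (𝒮 i))) := by
    intro i j hij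
    rw [Function.onFun, Set.disjoint_left]
    rintro x ⟨hxi, hxi'⟩ ⟨hxj, hxj'⟩
    rcases hnest (top i) (htopΔ i) (top j) (htopΔ j) with h | h | h
    · obtain ⟨Q, hQ, hsub⟩ := key i j hij h
      exact hxj' ⟨Q, hQ, hsub hxi⟩
    · obtain ⟨Q, hQ, hsub⟩ := key j i hij.symm h
      exact hxi' ⟨Q, hQ, hsub hxj⟩
    · exact absurd h (by rw [Set.eq_empty_iff_forall_notMem]; push_neg; exact ⟨x, hxi, hxj⟩)
  refine ⟨hpair, fun R hR => ?_⟩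
  calc (∑' j : {i : ι // μ (top i) / 4 ≤ μ (top i \ ⋃₀ minCubes (𝒮 i)) ∧ top i ⊆ R},
        μ (top j.1))
      ≤ ∑' j : {i : ι // μ (top i) / 4 ≤ μ (top i \ ⋃₀ minCubes (𝒮 i)) ∧ top i ⊆ R},
        4 * μ (top j.1 \ ⋃₀ minCubes (𝒮 j.1)) := by
        refine ENNReal.tsum_le_tsum fun j => ?_
        calc μ (top j.1) = 4 * (μ (top j.1) / 4) :=
              (ENNReal.mul_div_cancel' (by norm_num) (by norm_num)).symm
          _ ≤ 4 * μ (top j.1 \ ⋃₀ minCubes (𝒮 j.1)) := by gcongr; exact j.2.1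
    _ = 4 * ∑' j : {i : ι // μ (top i) / 4 ≤ μ (top i \ ⋃₀ minCubes (𝒮 i)) ∧ top i ⊆ R},
        μ (top j.1 \ ⋃₀ minCubes (𝒮 j.1)) := ENNReal.tsum_mul_left
    _ = 4 * μ (⋃ j : {i : ι // μ (top i) / 4 ≤ μ (top i \ ⋃₀ minCubes (𝒮 i)) ∧ top i ⊆ R},
        (top j.1 \ ⋃₀ minCubes (𝒮 j.1))) := by
        have hd : Pairwise (Function.onFun Disjoint
            (fun j : {i : ι // μ (top i) / 4 ≤ μ (top i \ ⋃₀ minCubes (𝒮 i)) ∧ top i ⊆ R} =>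
              top j.1 \ ⋃₀ minCubes (𝒮 j.1))) :=
          fun a b hab => hpair (Subtype.coe_injective.ne hab)
        rw [measure_iUnion hd (fun j => hEmeas j.1)]
    _ ≤ 4 * μ R := by
        gcongr
        exact Set.iUnion_subset fun j => Set.diff_subset.trans j.2.2
end

section
/- Bounded overlap of the Carleson boxes of stopping regions: with notation as in the paper, for each stopping region 𝒮 with top cube Q(𝒮) and stopping-distance function h_𝒮(x) = inf{ d(x,Q) + diam(Q) : Q ∈ 𝒮 }, set E_𝒮 = { (x,t) ∈ K₀Q(𝒮) × (0, K₀ diam Q(𝒮)) : h_𝒮(x) < K₀ t }. Then there is a constant C (depending on K₀ and the regularity data) such that Σ_{𝒮∈𝔉} χ_{E_𝒮}(x,t) ≤ C for all (x,t) ∈ E × ℝ. -/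
open Metric MeasureTheory

set_option maxHeartbeats 2000000 in
/-- Bounded overlap of the Carleson boxes of the stopping regions: with
`h_𝒮(x) = inf { d(x,Q) + diam Q : Q ∈ 𝒮 }` and
`E_𝒮 = {(x,t) ∈ K₀Q(𝒮) × (0, K₀ diam Q(𝒮)) : h_𝒮(x) < K₀ t}`, there is a constant `C`
(depending on `K₀` and the regularity data) with `Σ_𝒮 χ_{E_𝒮}(x,t) ≤ C` for all
`(x,t) ∈ E × ℝ`. -/
theorem stmt18 {X : Type*} [MetricSpace X] [MeasurableSpace X] (μ : Measure X)
    (E : Set X) (k : ℕ) (α D C_E K₀ : ℝ)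
    (hα : 1 < α) (hD : 1 < D) (hCE : 0 < C_E) (hK₀ : 1 ≤ K₀)
    -- Christ–David cubes `Δ j` of generation `j`
    (Δ : ℤ → Set (Set X))
    (hmeas : ∀ j, ∀ Q ∈ Δ j, MeasurableSet Q)
    (hsubE : ∀ j, ∀ Q ∈ Δ j, Q ⊆ E)
    (hne : ∀ j, ∀ Q ∈ Δ j, Q.Nonempty)
    (hgendisj : ∀ j, ∀ Q ∈ Δ j, ∀ R ∈ Δ j, Q ≠ R → Q ∩ R = ∅)
    (hnest : ∀ j l, ∀ Q ∈ Δ j, ∀ R ∈ Δ l, Q ⊆ R ∨ R ⊆ Q ∨ Q ∩ R = ∅)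
    (hdiam : ∀ j, ∀ Q ∈ Δ j, D⁻¹ * α ^ j ≤ diam Q ∧ diam Q ≤ D * α ^ j)
    (hmass : ∀ j, ∀ Q ∈ Δ j,
      ENNReal.ofReal (D⁻¹ * (α ^ j) ^ k) ≤ μ Q ∧
        μ Q ≤ ENNReal.ofReal (D * (α ^ j) ^ k))
    (hparent : ∀ j, ∀ Q ∈ Δ j, ∃ R ∈ Δ (j + 1), Q ⊆ R)
    -- upper `k`-regularity of `μ` on `E`
    (hreg : ∀ x ∈ E, ∀ r : ℝ, 0 < r →
        μ (closedBall x r) ≤ ENNReal.ofReal (C_E * r ^ k))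
    -- the stopping regions
    {ι : Type*} (𝒮 : ι → Set (Set X))
    (hSΔ : ∀ i, 𝒮 i ⊆ ⋃ j, Δ j)
    (hdisj : ∀ i j, i ≠ j → 𝒮 i ∩ 𝒮 j = ∅)
    (top : ι → Set X)
    (htopmem : ∀ i, top i ∈ 𝒮 i)
    (htop : ∀ i, ∀ Q ∈ 𝒮 i, Q ⊆ top i)
    (hcoh : ∀ i, ∀ Q ∈ 𝒮 i, ∀ j, ∀ R ∈ Δ j, Q ⊆ R → R ⊆ top i → R ∈ 𝒮 i)
    (hfinanc : ∀ i, ∀ Q : Set X, Q ∈ ⋃ j, Δ j → {R ∈ 𝒮 i | Q ⊆ R}.Finite) :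
    ∃ C : ℕ, ∀ x ∈ E, ∀ t : ℝ,
      {i : ι |
          infDist x (top i) ≤ (K₀ - 1) * diam (top i) ∧
          0 < t ∧ t < K₀ * diam (top i) ∧
          sInf ((fun Q => infDist x Q + diam Q) '' 𝒮 i) < K₀ * t}.encard
        ≤ (C : ℕ∞) := by
  classical
  have hα0 : (0:ℝ) < α := lt_trans one_pos hα
  have hD0 : (0:ℝ) < D := lt_trans one_pos hD
  have hK0 : (0:ℝ) < K₀ := lt_of_lt_of_le one_pos hK₀
  -- all cubes are bounded
  have hbdd : ∀ j, ∀ Q ∈ Δ j, Bornology.IsBounded Q := by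
    intro j Q hQ
    by_contra h
    have h0 : diam Q = 0 := diam_eq_zero_of_unbounded h
    have h1 : D⁻¹ * α ^ j ≤ diam Q := (hdiam j Q hQ).1
    have h2 : (0:ℝ) < D⁻¹ * α ^ j := by positivity
    linarith [h0 ▸ h1]
  set B : ℝ := K₀ + D ^ 2 * α with hBdef
  have hB0 : (0:ℝ) < B := by positivity
  -- key cube selection lemma
  have keycube : ∀ i (t : ℝ), 0 < t → t < K₀ * diam (top i) →
      ∀ Q, Q ∈ 𝒮 i → diam Q < K₀ * t →
      ∃ Qs js, Qs ∈ 𝒮 i ∧ Qs ∈ Δ js ∧ Q ⊆ Qs ∧ t < K₀ * diam Qs ∧ diam Qs ≤ B * t := by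
    intro i t ht httop Q hQ hdQ
    by_cases hc : t < K₀ * diam Q
    · obtain ⟨j, hj⟩ := Set.mem_iUnion.mp (hSΔ i hQ)
      have : (0:ℝ) ≤ D ^ 2 * α * t := by positivity
      exact ⟨Q, j, hQ, hj, subset_rfl, hc, by rw [hBdef]; nlinarith⟩
    · push_neg at hc
      obtain ⟨N, hN⟩ : ∃ N : ℕ, D * t < α ^ N := pow_unbounded_of_one_lt _ hα
      obtain ⟨jt, hjt⟩ := Set.mem_iUnion.mp (hSΔ i (htopmem i))
      have claim : ∀ n : ℕ, ∀ j : ℤ, ((N:ℤ) - j).toNat ≤ n → ∀ R, R ∈ Δ j → R ∈ 𝒮 i →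
          Q ⊆ R → K₀ * diam R ≤ t →
          ∃ Qs js, Qs ∈ 𝒮 i ∧ Qs ∈ Δ js ∧ Q ⊆ Qs ∧ t < K₀ * diam Qs ∧ diam Qs ≤ B * t := by
        intro n
        induction n with
        | zero =>
          intro j hj R hRΔ hRS hQR hdR
          exfalso
          have hjN : (N:ℤ) ≤ j := by omega
          have h1 : (α:ℝ) ^ (N:ℤ) ≤ α ^ j := zpow_le_zpow_right₀ hα.le hjN
          have h2 : D⁻¹ * α ^ j ≤ diam R := (hdiam j R hRΔ).1
      -- α^j ≤ D * diam R ≤ D * t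
          have h3 : α ^ j ≤ D * diam R := by
            have := mul_le_mul_of_nonneg_left h2 hD0.le
            calc α ^ j = D * (D⁻¹ * α ^ j) := by field_simp
            _ ≤ D * diam R := this
          have hdR' : diam R ≤ t := by nlinarith [diam_nonneg (s := R)]
          have h4 : D * diam R ≤ D * t := by nlinarith
          rw [zpow_natCast] at h1
          linarith
        | succ n ih =>
          intro j hj R hRΔ hRS hQR hdR
          obtain ⟨P, hPΔ, hRP⟩ := hparent j R hRΔ
          have hRne : R.Nonempty := hne j R hRΔ
          have hRtop : R ⊆ top i := htop i R hRS
          have h2 : D⁻¹ * α ^ j ≤ diam R := (hdiam j R hRΔ).1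
          have h3 : α ^ j ≤ D * diam R := by
            have := mul_le_mul_of_nonneg_left h2 hD0.le
            calc α ^ j = D * (D⁻¹ * α ^ j) := by field_simp
            _ ≤ D * diam R := this
          have hdR' : diam R ≤ t := by nlinarith [diam_nonneg (s := R)]
          have hαj : α ^ j ≤ D * t := by nlinarith
          -- diam P ≤ D^2 * α * t ≤ B * t
          have hPbound : diam P ≤ B * t := by
            have h5 : diam P ≤ D * α ^ (j+1) := (hdiam (j+1) P hPΔ).2
            have h6 : (α:ℝ) ^ (j+1) = α ^ j * α := by
              rw [zpow_add_one₀ (ne_of_gt hα0)]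
            have h7 : (0:ℝ) ≤ D * α := by positivity
            have h8 := mul_le_mul_of_nonneg_left hαj h7
            have h9 : (0:ℝ) ≤ K₀ * t := by positivity
            rw [hBdef]
            nlinarith
          rcases hnest (j+1) jt P hPΔ (top i) hjt with hPt | htP | hint
          · have hPS : P ∈ 𝒮 i := hcoh i R hRS (j+1) P hPΔ hRP hPt
            by_cases hc2 : t < K₀ * diam P
            · exact ⟨P, j+1, hPS, hPΔ, hQR.trans hRP, hc2, hPbound⟩
            · push_neg at hc2
              exact ih (j+1) (by omega) P hPΔ hPS (hQR.trans hRP) hc2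
          · refine ⟨top i, jt, htopmem i, hjt, htop i Q hQ, httop, ?_⟩
            have := diam_mono htP (hbdd (j+1) P hPΔ)
            linarith
          · exfalso
            obtain ⟨y, hy⟩ := hRne
            have : y ∈ P ∩ top i := ⟨hRP hy, hRtop hy⟩
            simp [hint] at this
      obtain ⟨j0, hj0⟩ := Set.mem_iUnion.mp (hSΔ i hQ)
      exact claim _ j0 le_rfl Q hj0 hQ subset_rfl hc
  -- fixed numerical constants
  set M₁ : ℝ := C_E * (K₀ + B) ^ k * D * (K₀ * D) ^ k with hM₁def
  obtain ⟨n, hn⟩ : ∃ n : ℕ, D * B * K₀ * D < α ^ n := pow_unbounded_of_one_lt _ hα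
  refine ⟨(2 * n + 1) * ⌈M₁⌉₊, ?_⟩
  intro x hx t
  set S : Set ι := {i : ι |
      infDist x (top i) ≤ (K₀ - 1) * diam (top i) ∧
      0 < t ∧ t < K₀ * diam (top i) ∧
      sInf ((fun Q => infDist x Q + diam Q) '' 𝒮 i) < K₀ * t} with hSdef
  -- for every index in the set, choose a good cube
  have hdata : ∀ i : ι, ∃ (Qs : Set X) (js : ℤ), i ∈ S →
      Qs ∈ 𝒮 i ∧ Qs ∈ Δ js ∧ t < K₀ * diam Qs ∧ diam Qs ≤ B * t ∧
        infDist x Qs < K₀ * t := by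
    intro i
    by_cases hi : i ∈ S
    · obtain ⟨-, ht0, httop, hsinf⟩ := hi
      have hne_im : ((fun Q => infDist x Q + diam Q) '' 𝒮 i).Nonempty :=
        ⟨_, Set.mem_image_of_mem _ (htopmem i)⟩
      have hbdd_im : BddBelow ((fun Q => infDist x Q + diam Q) '' 𝒮 i) := by
        refine ⟨0, ?_⟩
        rintro v ⟨Q, hQ, rfl⟩
        exact add_nonneg infDist_nonneg diam_nonneg
      obtain ⟨v, ⟨Q, hQ, rfl⟩, hv⟩ := (csInf_lt_iff hbdd_im hne_im).mp hsinf
      have hdQ : diam Q < K₀ * t :=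
        lt_of_le_of_lt (le_add_of_nonneg_left infDist_nonneg) hv
      have hxQ : infDist x Q < K₀ * t :=
        lt_of_le_of_lt (le_add_of_nonneg_right diam_nonneg) hv
      obtain ⟨Qs, js, hQsS, hQsΔ, hsub, hQ1, hQ2⟩ := keycube i t ht0 httop Q hQ hdQ
      have hQne : Q.Nonempty := by
        obtain ⟨j, hj⟩ := Set.mem_iUnion.mp (hSΔ i hQ)
        exact hne j Q hj
      exact ⟨Qs, js, fun _ => ⟨hQsS, hQsΔ, hQ1, hQ2,
        lt_of_le_of_lt (infDist_le_infDist_of_subset hsub hQne) hxQ⟩⟩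
    · exact ⟨∅, 0, fun h => absurd h hi⟩
  choose g f hg using hdata
  -- generation window
  have hαup : ∀ i ∈ S, α ^ (f i) ≤ D * (B * t) := by
    intro i hi
    obtain ⟨-, hΔ, -, hd2, -⟩ := hg i hi
    have h2 : D⁻¹ * α ^ (f i) ≤ diam (g i) := (hdiam _ _ hΔ).1
    have h3 : α ^ (f i) ≤ D * diam (g i) := by
      have := mul_le_mul_of_nonneg_left h2 hD0.le
      calc α ^ (f i) = D * (D⁻¹ * α ^ (f i)) := by field_simp
      _ ≤ D * diam (g i) := this
    nlinarith
  have hαlo : ∀ i ∈ S, t / (K₀ * D) < α ^ (f i) := by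
    intro i hi
    obtain ⟨-, hΔ, hd1, -, -⟩ := hg i hi
    have h2 : diam (g i) ≤ D * α ^ (f i) := (hdiam _ _ hΔ).2
    rw [div_lt_iff₀ (by positivity)]
    have := mul_le_mul_of_nonneg_left h2 hK0.le
    have hd1' := hi.2.2.1
    nlinarith
  have hwin : ∀ i ∈ S, ∀ i' ∈ S, f i < f i' + n := by
    intro i hi i' hi'
    have ht0 : 0 < t := hi.2.1
    have h1 := hαup i hi
    have h2 := hαlo i' hi'
    have ht' : (0:ℝ) < t / (K₀ * D) := by positivity
    have heq : t / (K₀ * D) * (D * B * K₀ * D) = D * (B * t) := by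
      field_simp
    have hlt : α ^ (f i) < α ^ (f i' + (n:ℤ)) := by
      rw [zpow_add₀ (ne_of_gt hα0), zpow_natCast]
      have := mul_lt_mul'' h2 hn ht'.le (by positivity)
      linarith [heq ▸ this]
    have := (zpow_lt_zpow_iff_right₀ hα).mp hlt
    omega
  -- the per-generation mass bound
  have key : ∀ s : Finset ι, ↑s ⊆ S → s.card ≤ (2 * n + 1) * ⌈M₁⌉₊ := by
    intro s hs
    rcases s.eq_empty_or_nonempty with rfl | ⟨i₀, hi₀⟩
    · simp
    have hi₀S : i₀ ∈ S := hs hi₀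
    have ht0 : 0 < t := hi₀S.2.1
    -- fiber bound
    have fiber : ∀ j : ℤ, (s.filter fun i => f i = j).card ≤ ⌈M₁⌉₊ := by
      intro j
      set u : Finset ι := s.filter fun i => f i = j with hu
      rcases u.eq_empty_or_nonempty with hue | ⟨i₁, hi₁⟩
      · simp [hue]
      have huS : ∀ i ∈ u, i ∈ S := fun i hi => hs (Finset.mem_filter.mp hi).1
      have huj : ∀ i ∈ u, f i = j := fun i hi => (Finset.mem_filter.mp hi).2
      have hi₁S : i₁ ∈ S := huS i₁ hi₁
      -- α^j lower bound
      have hαjlo : t / (K₀ * D) < α ^ j := (huj i₁ hi₁) ▸ hαlo i₁ hi₁S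
      set m : ℝ := D⁻¹ * (t / (K₀ * D)) ^ k with hmdef
      have hm0 : (0:ℝ) < m := by positivity
      set F : Finset (Set X) := u.image g with hF
      have hginj : Set.InjOn g ↑u := by
        intro a ha b hb hab
        by_contra hne'
        have h1 : g a ∈ 𝒮 a := (hg a (huS a ha)).1
        have h2 : g b ∈ 𝒮 b := (hg b (huS b hb)).1
        have : g a ∈ 𝒮 a ∩ 𝒮 b := ⟨h1, hab ▸ h2⟩
        rw [hdisj a b hne'] at this
        exact this
      have hFcard : F.card = u.card := Finset.card_image_of_injOn hginj
      have hFΔ : ∀ Q ∈ F, Q ∈ Δ j := by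
        intro Q hQ
        obtain ⟨i, hi, rfl⟩ := Finset.mem_image.mp hQ
        exact (huj i hi) ▸ (hg i (huS i hi)).2.1
      have hFdisj : (↑F : Set (Set X)).PairwiseDisjoint id := by
        intro Q hQ R hR hne'
        have := hgendisj j Q (hFΔ Q hQ) R (hFΔ R hR) hne'
        exact Set.disjoint_iff_inter_eq_empty.mpr this
      have hFmeas : ∀ Q ∈ F, MeasurableSet Q := fun Q hQ => hmeas j Q (hFΔ Q hQ)
      -- each cube is in the ball of radius (K₀ + B) * t
      have hFball : ∀ Q ∈ F, Q ⊆ closedBall x ((K₀ + B) * t) := by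
        intro Q hQ
        obtain ⟨i, hi, rfl⟩ := Finset.mem_image.mp hQ
        obtain ⟨-, hΔ, -, hd2, hx2⟩ := hg i (huS i hi)
        have hQne : (g i).Nonempty := hne _ _ hΔ
        obtain ⟨z, hz, hzd⟩ := (infDist_lt_iff hQne).mp hx2
        intro y hy
        rw [mem_closedBall]
        have h1 : dist y z ≤ diam (g i) := dist_le_diam_of_mem (hbdd _ _ hΔ) hy hz
        have h2 : dist y x ≤ dist y z + dist z x := dist_triangle y z x
        rw [dist_comm z x] at h2
        have hexp : (K₀ + B) * t = K₀ * t + B * t := by ring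
        linarith
      -- measure lower bound of each cube
      have hFm : ∀ Q ∈ F, ENNReal.ofReal m ≤ μ Q := by
        intro Q hQ
        refine le_trans ?_ (hmass j Q (hFΔ Q hQ)).1
        apply ENNReal.ofReal_le_ofReal
        have h1 : (t / (K₀ * D)) ^ k ≤ (α ^ j) ^ k :=
          pow_le_pow_left₀ (by positivity) hαjlo.le k
        exact mul_le_mul_of_nonneg_left h1 (by positivity)
      -- sum comparison
      have hsum : (F.card : ENNReal) * ENNReal.ofReal m ≤
          ENNReal.ofReal (C_E * ((K₀ + B) * t) ^ k) := by
        calc (F.card : ENNReal) * ENNReal.ofReal m = F.card • ENNReal.ofReal m := by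
              rw [nsmul_eq_mul]
        _ ≤ ∑ Q ∈ F, μ Q := Finset.card_nsmul_le_sum F _ _ hFm
        _ = μ (⋃ Q ∈ F, Q) := (measure_biUnion_finset hFdisj hFmeas).symm
        _ ≤ μ (closedBall x ((K₀ + B) * t)) := by
              apply measure_mono
              exact Set.iUnion₂_subset hFball
        _ ≤ ENNReal.ofReal (C_E * ((K₀ + B) * t) ^ k) :=
              hreg x hx _ (by positivity)
      -- translate to a real inequality
      have hreal : (F.card : ℝ) * m ≤ C_E * ((K₀ + B) * t) ^ k := by
        rw [← ENNReal.ofReal_le_ofReal_iff (by positivity), ENNReal.ofReal_mul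
          (by positivity), ENNReal.ofReal_natCast]
        exact hsum
      have hMeq : C_E * ((K₀ + B) * t) ^ k = M₁ * m := by
        rw [hM₁def, hmdef, mul_pow, div_pow, mul_pow]
        field_simp
      have hcard : (F.card : ℝ) ≤ M₁ := by
        rw [hMeq] at hreal
        exact le_of_mul_le_mul_right hreal hm0
      have : (F.card : ℝ) ≤ (⌈M₁⌉₊ : ℝ) := le_trans hcard (Nat.le_ceil M₁)
      have := Nat.cast_le.mp (by exact_mod_cast this : (F.card : ℝ) ≤ ((⌈M₁⌉₊ : ℕ) : ℝ))
      rw [hFcard] at this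
      exact this
    -- assemble
    have himg : s.image f ⊆ Finset.Icc (f i₀ - n) (f i₀ + n) := by
      intro j hj
      obtain ⟨i, hi, rfl⟩ := Finset.mem_image.mp hj
      have h1 := hwin i (hs hi) i₀ hi₀S
      have h2 := hwin i₀ hi₀S i (hs hi)
      rw [Finset.mem_Icc]
      omega
    have himgcard : (s.image f).card ≤ 2 * n + 1 := by
      have := Finset.card_le_card himg
      rw [Int.card_Icc] at this
      omega
    calc s.card = ∑ j ∈ s.image f, (s.filter fun i => f i = j).card :=
          Finset.card_eq_sum_card_image f s
    _ ≤ (s.image f).card • ⌈M₁⌉₊ := Finset.sum_le_card_nsmul _ _ _ (fun j _ => fiber j)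
    _ = (s.image f).card * ⌈M₁⌉₊ := by rw [smul_eq_mul]
    _ ≤ (2 * n + 1) * ⌈M₁⌉₊ := Nat.mul_le_mul_right _ himgcard
  -- conclude the encard bound
  by_contra hcon
  push_neg at hcon
  set C : ℕ := (2 * n + 1) * ⌈M₁⌉₊ with hCdef
  have hle : ((C + 1 : ℕ) : ℕ∞) ≤ S.encard := by
    have := Order.add_one_le_of_lt hcon
    exact_mod_cast this
  obtain ⟨T, hTsub, hTcard⟩ := Set.exists_subset_encard_eq hle
  have hTfin : T.Finite := Set.finite_of_encard_eq_coe hTcard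
  have hTc : hTfin.toFinset.card = C + 1 := by
    have := Set.encard_coe_eq_coe_finsetCard hTfin.toFinset
    rw [Set.Finite.coe_toFinset] at this
    rw [hTcard] at this
    exact_mod_cast this.symm
  have := key hTfin.toFinset (by rw [Set.Finite.coe_toFinset]; exact hTsub)
  rw [hTc] at this
  omega
end
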